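/- For every natural number n, the number of partitions of n into distinct parts none of which is divisible by 3 equals the number of partitions of n into parts congruent to 1 or 5 modulo 6. -/

import Mathlib

open PowerSeries

namespace Theorems100

noncomputable section

variable {α : Type*}

open Finset

open scoped Classical

/-- The partial product for the generating function for odd partitions.
TODO: As `m` tends to infinity, this converges (in the `X`-adic topology).

If `m` is sufficiently large, the `i`th coefficient gives the number of odd partitions of the
natural number `i`: proved in `oddGF_prop`.
It is stated for an arbitrary field `α`, though it usually suffices to use `ℚ` or `ℝ`.
-/
def partialOddGF (m : ℕ) [Field α] :=
  ∏ i ∈ range m, (1 - (X : PowerSeries α) ^ (2 * i + 1))⁻¹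

/-- The partial product for the generating function for distinct partitions.
TODO: As `m` tends to infinity, this converges (in the `X`-adic topology).

If `m` is sufficiently large, the `i`th coefficient gives the number of distinct partitions of the
natural number `i`: proved in `distinctGF_prop`.
It is stated for an arbitrary commutative semiring `α`, though it usually suffices to use `ℕ`, `ℚ`
or `ℝ`.
-/
def partialDistinctGF (m : ℕ) [CommSemiring α] :=
  ∏ i ∈ range m, (1 + (X : PowerSeries α) ^ (i + 1))

open Finset.HasAntidiagonal

universe u
variable {ι : Type u}

/-- A convenience constructor for the power series whose coefficients indicate a subset. -/
def indicatorSeries (α : Type*) [Semiring α] (s : Set ℕ) : PowerSeries α :=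
  PowerSeries.mk fun n => if n ∈ s then 1 else 0

theorem coeff_indicator (s : Set ℕ) [Semiring α] (n : ℕ) :
    coeff n (indicatorSeries α s) = if n ∈ s then 1 else 0 :=
  coeff_mk _ _

theorem coeff_indicator_pos (s : Set ℕ) [Semiring α] (n : ℕ) (h : n ∈ s) :
    coeff n (indicatorSeries α s) = 1 := by rw [coeff_indicator, if_pos h]

theorem coeff_indicator_neg (s : Set ℕ) [Semiring α] (n : ℕ) (h : n ∉ s) :
    coeff n (indicatorSeries α s) = 0 := by rw [coeff_indicator, if_neg h]

theorem constantCoeff_indicator (s : Set ℕ) [Semiring α] :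
    constantCoeff (indicatorSeries α s) = if 0 ∈ s then 1 else 0 :=
  rfl

theorem two_series (i : ℕ) [Semiring α] :
    1 + (X : PowerSeries α) ^ i.succ = indicatorSeries α {0, i.succ} := by
  ext n
  simp only [coeff_indicator, coeff_one, coeff_X_pow, Set.mem_insert_iff, Set.mem_singleton_iff,
    map_add]
  cases' n with d
  · simp [(Nat.succ_ne_zero i).symm]
  · simp [Nat.succ_ne_zero d]

theorem num_series' [Field α] (i : ℕ) :
    (1 - (X : PowerSeries α) ^ (i + 1))⁻¹ = indicatorSeries α {k | i + 1 ∣ k} := by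
  rw [PowerSeries.inv_eq_iff_mul_eq_one]
  · ext n
    cases n with
    | zero => simp [mul_sub, zero_pow, constantCoeff_indicator]
    | succ n =>
      simp only [coeff_one, if_false, mul_sub, mul_one, coeff_indicator,
        LinearMap.map_sub, reduceCtorEq]
      simp_rw [coeff_mul, coeff_X_pow, coeff_indicator, @boole_mul _ _ _ _]
      erw [@sum_ite _ _ _ _ _ (fun _ => Classical.propDecidable _), sum_ite]
      simp_rw [@filter_filter _ _ _ _ _, sum_const_zero, add_zero, sum_const, nsmul_eq_mul, mul_one,
        sub_eq_iff_eq_add, zero_add]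
      symm
      split_ifs with h
      · suffices #{a ∈ antidiagonal (n + 1) | i + 1 ∣ a.fst ∧ a.snd = i + 1} = 1 by
          simp only [Set.mem_setOf_eq]; convert congr_arg ((↑) : ℕ → α) this; norm_cast
        rw [card_eq_one]
        cases' h with p hp
        refine ⟨((i + 1) * (p - 1), i + 1), ?_⟩
        ext ⟨a₁, a₂⟩
        simp only [mem_filter, Prod.mk_inj, HasAntidiagonal.mem_antidiagonal, mem_singleton]
        constructor
        · rintro ⟨a_left, ⟨a, rfl⟩, rfl⟩
          refine ⟨?_, rfl⟩
          rw [Nat.mul_sub_left_distrib, ← hp, ← a_left, mul_one, Nat.add_sub_cancel]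
        · rintro ⟨rfl, rfl⟩
          match p with
          | 0 => rw [mul_zero] at hp; cases hp
          | p + 1 => rw [hp]; simp [mul_add]
      · suffices #{a ∈ antidiagonal (n + 1) | i + 1 ∣ a.fst ∧ a.snd = i + 1} = 0 by
          simp only [Set.mem_setOf_eq]; convert congr_arg ((↑) : ℕ → α) this; norm_cast
        rw [card_eq_zero]
        apply eq_empty_of_forall_notMem
        simp only [Prod.forall, mem_filter, not_and, HasAntidiagonal.mem_antidiagonal]
        rintro _ h₁ h₂ ⟨a, rfl⟩ rfl
        apply h
        simp [← h₂]
  · simp [zero_pow]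

def mkOdd : ℕ ↪ ℕ :=
  ⟨fun i => 2 * i + 1, fun x y h => by linarith⟩

-- The main workhorse of the partition theorem proof.
theorem partialGF_prop (α : Type*) [CommSemiring α] (n : ℕ) (s : Finset ℕ) (hs : ∀ i ∈ s, 0 < i)
    (c : ℕ → Set ℕ) (hc : ∀ i, i ∉ s → 0 ∈ c i) :
    #{p : n.Partition | (∀ j, p.parts.count j ∈ c j) ∧ ∀ j ∈ p.parts, j ∈ s} =
      coeff n (∏ i ∈ s, indicatorSeries α ((· * i) '' c i)) := by
  simp_rw [coeff_prod, coeff_indicator, prod_boole, sum_boole]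
  apply congr_arg
  simp only [mem_univ, forall_true_left, not_and, not_forall, exists_prop,
    Set.mem_image, not_exists]
  set φ : (a : Nat.Partition n) →
    a ∈ filter (fun p ↦ (∀ (j : ℕ), Multiset.count j p.parts ∈ c j) ∧ ∀ j ∈ p.parts, j ∈ s) univ →
    ℕ →₀ ℕ := fun p _ => {
      toFun := fun i => Multiset.count i p.parts • i
      support := Finset.filter (fun i => i ≠ 0) p.parts.toFinset
      mem_support_toFun := fun a => by
        simp only [smul_eq_mul, ne_eq, mul_eq_zero, Multiset.count_eq_zero]
        rw [not_or, not_not]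
        simp only [Multiset.mem_toFinset, not_not, mem_filter] }
  refine Finset.card_bij φ ?_ ?_ ?_
  · intro a ha
    simp only [φ, not_forall, not_exists, not_and, exists_prop, mem_filter]
    rw [mem_finsuppAntidiag]
    dsimp only [ne_eq, smul_eq_mul, id_eq, eq_mpr_eq_cast, le_eq_subset, Finsupp.coe_mk]
    simp only [mem_univ, forall_true_left, not_and, not_forall, exists_prop,
      mem_filter, true_and] at ha
    refine ⟨⟨?_, fun i ↦ ?_⟩, fun i _ ↦ ⟨a.parts.count i, ha.1 i, rfl⟩⟩
    · conv_rhs => simp [← a.parts_sum]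
      rw [sum_multiset_count_of_subset _ s]
      · simp only [smul_eq_mul]
      · intro i
        simp only [Multiset.mem_toFinset, not_not, mem_filter]
        apply ha.2
    · simp only [ne_eq, Multiset.mem_toFinset, not_not, mem_filter, and_imp]
      exact fun hi _ ↦ ha.2 i hi
  · intro p₁ hp₁ p₂ hp₂ h
    apply Nat.Partition.ext
    simp only [true_and, mem_univ, mem_filter] at hp₁ hp₂
    ext i
    simp only [φ, ne_eq, Multiset.mem_toFinset, not_not, smul_eq_mul, Finsupp.mk.injEq] at h
    by_cases hi : i = 0
    · rw [hi]
      rw [Multiset.count_eq_zero_of_notMem]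
      · rw [Multiset.count_eq_zero_of_notMem]
        intro a; exact Nat.lt_irrefl 0 (hs 0 (hp₂.2 0 a))
      intro a; exact Nat.lt_irrefl 0 (hs 0 (hp₁.2 0 a))
    · rw [← mul_left_inj' hi]
      rw [funext_iff] at h
      exact h.2 i
  · simp only [φ, mem_filter, mem_finsuppAntidiag, mem_univ, exists_prop, true_and, and_assoc]
    rintro f ⟨hf, hf₃, hf₄⟩
    have hf' : f ∈ finsuppAntidiag s n := mem_finsuppAntidiag.mpr ⟨hf, hf₃⟩
    simp only [mem_finsuppAntidiag] at hf'
    refine ⟨⟨∑ i ∈ s, Multiset.replicate (f i / i) i, ?_, ?_⟩, ?_, ?_, ?_⟩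
    · intro i hi
      simp only [exists_prop, Multiset.mem_sum, mem_map, Function.Embedding.coeFn_mk] at hi
      rcases hi with ⟨t, ht, z⟩
      apply hs
      rwa [Multiset.eq_of_mem_replicate z]
    · simp_rw [Multiset.sum_sum, Multiset.sum_replicate, Nat.nsmul_eq_mul]
      rw [← hf'.1]
      refine sum_congr rfl fun i hi => Nat.div_mul_cancel ?_
      rcases hf₄ i hi with ⟨w, _, hw₂⟩
      rw [← hw₂]
      exact dvd_mul_left _ _
    · intro i
      simp_rw [Multiset.count_sum', Multiset.count_replicate, sum_ite_eq']
      split_ifs with h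
      · rcases hf₄ i h with ⟨w, hw₁, hw₂⟩
        rwa [← hw₂, Nat.mul_div_cancel _ (hs i h)]
      · exact hc _ h
    · intro i hi
      rw [Multiset.mem_sum] at hi
      rcases hi with ⟨j, hj₁, hj₂⟩
      rwa [Multiset.eq_of_mem_replicate hj₂]
    · ext i
      simp_rw [Multiset.count_sum', Multiset.count_replicate, sum_ite_eq']
      simp only [ne_eq, Multiset.mem_toFinset, not_not, smul_eq_mul, ite_mul,
        zero_mul, Finsupp.coe_mk]
      split_ifs with h
      · apply Nat.div_mul_cancel
        rcases hf₄ i h with ⟨w, _, hw₂⟩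
        apply Dvd.intro_left _ hw₂
      · apply symm
        rw [← Finsupp.notMem_support_iff]
        exact notMem_mono hf'.2 h

/-! ### Schur's theorem -/

/-- Parts allowed for the "distinct" side: `1 ≤ k ≤ N` and `¬ 3 ∣ k`. -/
def schurT (N : ℕ) : Finset ℕ := (Finset.Icc 1 N).filter (fun k => ¬ 3 ∣ k)

/-- Parts allowed for the "mod 6" side: additionally odd. -/
def schurB (N : ℕ) : Finset ℕ := (schurT N).filter (fun k => ¬ 2 ∣ k)

/-- Leftover high-order factors. -/
def schurD (N : ℕ) : Finset ℕ :=
  (schurT N).image (fun k => 2 * k) \ (schurT N).filter (fun k => 2 ∣ k)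

theorem mem_schurT {N k : ℕ} : k ∈ schurT N ↔ (1 ≤ k ∧ k ≤ N) ∧ ¬ 3 ∣ k := by
  simp [schurT, Finset.mem_filter, Finset.mem_Icc, and_assoc]

theorem mem_schurB {N k : ℕ} : k ∈ schurB N ↔ ((1 ≤ k ∧ k ≤ N) ∧ ¬ 3 ∣ k) ∧ ¬ 2 ∣ k := by
  simp [schurB, Finset.mem_filter, mem_schurT]

theorem schurD_large {N j : ℕ} (hj : j ∈ schurD N) : N < j := by
  simp only [schurD, Finset.mem_sdiff, Finset.mem_image, Finset.mem_filter] at hj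
  obtain ⟨⟨k, hk, rfl⟩, h2⟩ := hj
  rw [mem_schurT] at hk
  by_contra h
  exact h2 ⟨mem_schurT.2 ⟨⟨by omega, by omega⟩, by omega⟩, ⟨k, rfl⟩⟩

theorem schur_unit [Field α] {k : ℕ} (hk : k ≠ 0) :
    (1 - (X : PowerSeries α) ^ k) * (1 - X ^ k)⁻¹ = 1 := by
  apply PowerSeries.mul_inv_cancel
  simp [zero_pow hk]

/-- The key generating-function identity. -/
theorem schur_gf [Field α] (N : ℕ) :
    (∏ k ∈ schurT N, (1 + (X : PowerSeries α) ^ k)) =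
      (∏ k ∈ schurB N, (1 - X ^ k)⁻¹) * ∏ j ∈ schurD N, (1 - X ^ j) := by
  have hT0 : ∀ k ∈ schurT N, k ≠ 0 := fun k hk => by
    have := (mem_schurT.1 hk).1.1; omega
  have hCsub : (schurT N).filter (fun k => 2 ∣ k) ⊆ (schurT N).image (fun k => 2 * k) := by
    intro j hj
    simp only [Finset.mem_filter] at hj
    obtain ⟨hjT, c, rfl⟩ := hj
    rw [mem_schurT] at hjT
    exact Finset.mem_image.2 ⟨c, mem_schurT.2 ⟨⟨by omega, by omega⟩, by omega⟩, rfl⟩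
  have h1 : (∏ k ∈ schurT N, (1 + (X : PowerSeries α) ^ k)) =
      (∏ k ∈ schurT N, (1 - X ^ (2 * k))) * ∏ k ∈ schurT N, (1 - X ^ k)⁻¹ := by
    rw [← Finset.prod_mul_distrib]
    refine Finset.prod_congr rfl fun k hk => ?_
    have : (1 : PowerSeries α) - X ^ (2 * k) = (1 + X ^ k) * (1 - X ^ k) := by
      rw [two_mul, pow_add]; ring
    rw [this, mul_assoc, schur_unit (hT0 k hk), mul_one]
  have h2 : (∏ k ∈ schurT N, ((1 : PowerSeries α) - X ^ (2 * k))) =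
      ∏ j ∈ (schurT N).image (fun k => 2 * k), (1 - X ^ j) := by
    rw [Finset.prod_image]
    intro a _ b _ h
    simp only at h
    omega
  have h3 : (∏ j ∈ (schurT N).image (fun k => 2 * k), ((1 : PowerSeries α) - X ^ j)) =
      (∏ j ∈ schurD N, (1 - X ^ j)) *
        ∏ j ∈ (schurT N).filter (fun k => 2 ∣ k), (1 - X ^ j) :=
    (Finset.prod_sdiff hCsub).symm
  have h4 : (∏ k ∈ schurT N, ((1 : PowerSeries α) - X ^ k)⁻¹) =
      (∏ k ∈ (schurT N).filter (fun k => 2 ∣ k), (1 - X ^ k)⁻¹) *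
        ∏ k ∈ schurB N, (1 - X ^ k)⁻¹ :=
    (Finset.prod_filter_mul_prod_filter_not _ _ _).symm
  have hC1 : (∏ j ∈ (schurT N).filter (fun k => 2 ∣ k), ((1 : PowerSeries α) - X ^ j)) *
      ∏ k ∈ (schurT N).filter (fun k => 2 ∣ k), (1 - X ^ k)⁻¹ = 1 := by
    rw [← Finset.prod_mul_distrib]
    refine Finset.prod_eq_one fun k hk => schur_unit (hT0 k (Finset.filter_subset _ _ hk))
  rw [h1, h2, h3, h4]
  set a := ∏ j ∈ schurD N, ((1 : PowerSeries α) - X ^ j)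
  set b := ∏ j ∈ (schurT N).filter (fun k => 2 ∣ k), ((1 : PowerSeries α) - X ^ j)
  set c := ∏ k ∈ (schurT N).filter (fun k => 2 ∣ k), ((1 : PowerSeries α) - X ^ k)⁻¹
  set d := ∏ k ∈ schurB N, ((1 : PowerSeries α) - X ^ k)⁻¹
  calc a * b * (c * d) = (b * c) * (d * a) := by ring
    _ = d * a := by rw [hC1, one_mul]

theorem schurB_gf_prop [Field α] (n N : ℕ) :
    #{p : n.Partition | ∀ j ∈ p.parts, j ∈ schurB N} =
      coeff (R := α) n (∏ k ∈ schurB N, (1 - X ^ k)⁻¹) := by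
  convert partialGF_prop α n (schurB N)
    (fun i hi => (mem_schurB.1 hi).1.1.1) (fun _ => Set.univ) (fun _ _ => trivial) using 2
  · congr
    simp only [true_and, forall_const, Set.mem_univ]
  · refine Finset.prod_congr rfl fun k hk => ?_
    obtain ⟨j, rfl⟩ : ∃ j, k = j + 1 := ⟨k - 1, by have := (mem_schurB.1 hk).1.1.1; omega⟩
    have hset : ((fun x => x * (j + 1)) '' Set.univ) = {k | j + 1 ∣ k} := by
      ext x
      constructor
      · rintro ⟨p, -, rfl⟩
        exact Dvd.intro_left p rfl
      · rintro ⟨p, rfl⟩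
        exact ⟨p, trivial, mul_comm _ _⟩
    rw [num_series', hset]

theorem schurT_gf_prop [Field α] (n N : ℕ) :
    #{p : n.Partition | p.parts.Nodup ∧ ∀ j ∈ p.parts, j ∈ schurT N} =
      coeff (R := α) n (∏ k ∈ schurT N, (1 + X ^ k)) := by
  convert partialGF_prop α n (schurT N)
    (fun i hi => (mem_schurT.1 hi).1.1) (fun _ => {0, 1}) (fun _ _ => Or.inl rfl) using 2
  · congr! with p
    rw [Multiset.nodup_iff_count_le_one]
    congr! 1 with i
    rcases Multiset.count i p.parts with (_ | _ | ms) <;> simp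
  · refine Finset.prod_congr rfl fun k hk => ?_
    obtain ⟨j, rfl⟩ : ∃ j, k = j + 1 := ⟨k - 1, by have := (mem_schurT.1 hk).1.1; omega⟩
    rw [two_series]
    simp [Set.image_pair]

theorem schur_counts (n : ℕ) :
    #{p : n.Partition | p.parts.Nodup ∧ ∀ j ∈ p.parts, j ∈ schurT (n + 1)} =
      #{p : n.Partition | ∀ j ∈ p.parts, j ∈ schurB (n + 1)} := by
  suffices h : (#{p : n.Partition | p.parts.Nodup ∧ ∀ j ∈ p.parts, j ∈ schurT (n + 1)} : ℚ) =
      #{p : n.Partition | ∀ j ∈ p.parts, j ∈ schurB (n + 1)} from mod_cast h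
  rw [schurT_gf_prop (α := ℚ) n (n + 1), schurB_gf_prop n (n + 1), schur_gf,
    coeff_mul_prod_one_sub_of_lt_order]
  intro j hj
  rw [order_X_pow]
  exact_mod_cast lt_trans (Nat.lt_succ_self n) (schurD_large hj)

end

end Theorems100

open Theorems100 in
theorem schur_mod_six (n : ℕ) :
    Nat.card {p : n.Partition // p.parts.Nodup ∧ ∀ i ∈ p.parts, ¬ 3 ∣ i} =
      Nat.card {p : n.Partition // ∀ i ∈ p.parts, i % 6 = 1 ∨ i % 6 = 5} := by
  classical
  rw [Nat.card_eq_fintype_card, Nat.card_eq_fintype_card, Fintype.card_subtype,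
    Fintype.card_subtype]
  have hbd : ∀ (p : n.Partition), ∀ i ∈ p.parts, 1 ≤ i ∧ i ≤ n := by
    intro p i hi
    refine ⟨p.parts_pos hi, ?_⟩
    simpa [p.parts_sum] using Multiset.single_le_sum (fun _ _ => Nat.zero_le _) _ hi
  have hL : (Finset.univ.filter fun p : n.Partition =>
        p.parts.Nodup ∧ ∀ i ∈ p.parts, ¬ 3 ∣ i) =
      (Finset.univ.filter fun p : n.Partition =>
        p.parts.Nodup ∧ ∀ j ∈ p.parts, j ∈ schurT (n + 1)) := by
    refine Finset.filter_congr fun p _ => and_congr_right fun _ => forall₂_congr fun i hi => ?_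
    have := hbd p i hi
    rw [mem_schurT]
    omega
  have hR : (Finset.univ.filter fun p : n.Partition =>
        ∀ i ∈ p.parts, i % 6 = 1 ∨ i % 6 = 5) =
      (Finset.univ.filter fun p : n.Partition => ∀ j ∈ p.parts, j ∈ schurB (n + 1)) := by
    refine Finset.filter_congr fun p _ => forall₂_congr fun i hi => ?_
    have := hbd p i hi
    rw [mem_schurB]
    omega
  rw [hL, hR]
  exact schur_counts n
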